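/- Let n ≥ 2 be an integer. The affine hypersurface {(z₁,z₂,z₃,z₄) ∈ ℂ⁴ : z₁z₂z₃ − z₄ⁿ = z₁ + z₂ + z₃} is smooth: at every point of it, at least one of the four partial derivatives z₂z₃ − 1, z₁z₃ − 1, z₁z₂ − 1, n z₄^{n−1} of the defining polynomial z₁z₂z₃ − z₄ⁿ − z₁ − z₂ − z₃ is nonzero. -/
import Mathlib


/-- For `n ≥ 2`, the hypersurface `{z₁z₂z₃ − z₄ⁿ = z₁ + z₂ + z₃}` is smooth: at each of
its points at least one of the partial derivatives `z₂z₃ − 1`, `z₁z₃ − 1`, `z₁z₂ − 1`,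
`n z₄^{n−1}` is nonzero. -/
theorem stmt16 (n : ℕ) (hn : 2 ≤ n) :
    ∀ z₁ z₂ z₃ z₄ : ℂ,
      z₁ * z₂ * z₃ - z₄ ^ n = z₁ + z₂ + z₃ →
        (z₂ * z₃ - 1 ≠ 0 ∨ z₁ * z₃ - 1 ≠ 0 ∨ z₁ * z₂ - 1 ≠ 0 ∨
          (n : ℂ) * z₄ ^ (n - 1) ≠ 0) := by
  intro z₁ z₂ z₃ z₄ heq
  by_contra h
  push_neg at h
  obtain ⟨h1, h2, h3, h4⟩ := h
  have hn0 : (n : ℂ) ≠ 0 := by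
    exact_mod_cast Nat.cast_ne_zero.mpr (by omega)
  have hz4 : z₄ = 0 := by
    rcases mul_eq_zero.mp h4 with h | h
    · exact absurd h hn0
    · exact pow_eq_zero_iff (by omega) |>.mp h
  have hz4n : z₄ ^ n = 0 := by
    rw [hz4]; exact zero_pow (by omega)
  have e1 : z₂ * z₃ = 1 := by linear_combination h1
  have e2 : z₁ * z₃ = 1 := by linear_combination h2
  have e3 : z₁ * z₂ = 1 := by linear_combination h3
  have hz3 : z₃ ≠ 0 := fun h => by simp [h] at e1
  have h12 : z₁ = z₂ := by
    have : z₃ * (z₁ - z₂) = 0 := by ring_nf; linear_combination e2 - e1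
    rcases mul_eq_zero.mp this with h | h
    · exact absurd h hz3
    · exact sub_eq_zero.mp h
  have hz2 : z₂ ≠ 0 := fun h => by simp [h] at e1
  have h23 : z₂ = z₃ := by
    have : z₂ * (z₃ - z₂) = 0 := by subst h12; linear_combination e1 - e3
    rcases mul_eq_zero.mp this with h | h
    · exact absurd h hz2
    · exact (sub_eq_zero.mp h).symm
  subst h12 h23
  rw [hz4n] at heq
  -- heq : z₁*z₁*z₁ - 0 = z₁+z₁+z₁, e3 : z₁*z₁ = 1
  have h3' : z₁ ^ 2 = 3 := by
    have hz1 : z₁ ≠ 0 := hz2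
    field_simp at heq
    have := mul_left_cancel₀ hz1 (by linear_combination heq : z₁ * (z₁ * z₁) = z₁ * 3)
    linear_combination this
  have h1' : z₁ ^ 2 = 1 := by linear_combination e3
  have : (3 : ℂ) = 1 := by rw [← h3', h1']
  norm_num at this
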